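/- Let s be a continuous linear functional on E, let α_1,…,α_k ≥ 0, and let x_1,…,x_k ∈ E. Define q(x) := s(x) + Σ_{i=1}^k α_i Δ(x, x_i). If x* is a minimizer of q over all of E, then for every x ∈ E, q(x) = (Σ_{i=1}^k α_i) Δ(x, x*) + q(x*). -/

import Mathlib

noncomputable section

open scoped BigOperators

/-- Bregman divergence induced by `d`. -/
def breg {E : Type*} [NormedAddCommGroup E] [NormedSpace ℝ E]
    (d : E → ℝ) (x y : E) : ℝ :=
  d x - d y - fderiv ℝ d y (x - y)

/-- `d` is `σ`-strongly convex with respect to the norm `‖·‖`. -/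
def StrongConvexOnNorm {E : Type*} [NormedAddCommGroup E] [NormedSpace ℝ E]
    (σ : ℝ) (d : E → ℝ) : Prop :=
  ∀ x y : E, d x ≥ d y + fderiv ℝ d y (x - y) + σ / 2 * ‖x - y‖ ^ 2

/-- `g` is a subgradient of the extended-real-valued function `h` at `y`. -/
def IsSubgradE {E : Type*} [NormedAddCommGroup E] [NormedSpace ℝ E]
    (h : E → EReal) (y : E) (g : E →L[ℝ] ℝ) : Prop :=
  ∀ x, h x ≥ h y + ((g (x - y) : ℝ) : EReal)

/-- `h` is `lam`-strongly convex with respect to `d` (extended-real-valued version). -/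
def ScWrtE {E : Type*} [NormedAddCommGroup E] [NormedSpace ℝ E]
    (d : E → ℝ) (lam : ℝ) (h : E → EReal) : Prop :=
  ∀ y : E, h y ≠ ⊤ → ∀ g : E →L[ℝ] ℝ, IsSubgradE h y g →
    ∀ x, h x ≥ h y + ((g (x - y) + lam * breg d x y : ℝ) : EReal)

/-- `f` is `lam`-strongly convex with respect to `d` (real-valued version). -/
def ScWrtR {E : Type*} [NormedAddCommGroup E] [NormedSpace ℝ E]
    (d : E → ℝ) (lam : ℝ) (f : E → ℝ) : Prop :=
  ∀ y : E, ∀ g : E →L[ℝ] ℝ, (∀ x, f x ≥ f y + g (x - y)) →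
    ∀ x, f x ≥ f y + g (x - y) + lam * breg d x y

/-- Convexity for extended-real-valued functions. -/
def ConvexE {E : Type*} [NormedAddCommGroup E] [NormedSpace ℝ E]
    (h : E → EReal) : Prop :=
  ∀ x y : E, ∀ a b : ℝ, 0 ≤ a → 0 ≤ b → a + b = 1 →
    h (a • x + b • y) ≤ ((a : ℝ) : EReal) * h x + ((b : ℝ) : EReal) * h y

/-- The lower model `ℓ_f(x; y, lam1)`. -/
def ellf {E : Type*} [NormedAddCommGroup E] [NormedSpace ℝ E]
    (d : E → ℝ) (f : E → ℝ) (lam1 : ℝ) (x y : E) : ℝ :=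
  f y + fderiv ℝ f y (x - y) + lam1 * breg d x y


/-- if `x*` is an unconstrained minimizer of
`q(x) = s(x) + Σ αᵢ Δ(x, xᵢ)`, then `q(x) = (Σ αᵢ) Δ(x, x*) + q(x*)` for all `x`. -/
theorem stmt4 {E : Type*} [NormedAddCommGroup E] [NormedSpace ℝ E] [FiniteDimensional ℝ E]
    (σ : ℝ) (hσ : 0 < σ)
    (d : E → ℝ) (hddiff : Differentiable ℝ d) (hdconv : ConvexOn ℝ Set.univ d)
    (hdsc : StrongConvexOnNorm σ d)
    (s : E →L[ℝ] ℝ) (k : ℕ) (α : Fin k → ℝ) (hα : ∀ i, 0 ≤ α i) (xs : Fin k → E)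
    (xstar : E)
    (hmin : ∀ x : E, s xstar + ∑ i, α i * breg d xstar (xs i) ≤
      s x + ∑ i, α i * breg d x (xs i)) :
    ∀ x : E, s x + ∑ i, α i * breg d x (xs i) =
      (∑ i, α i) * breg d x xstar + (s xstar + ∑ i, α i * breg d xstar (xs i)) := by
  classical
  set g0 : E →L[ℝ] ℝ := s + ∑ i, α i • (fderiv ℝ d xstar - fderiv ℝ d (xs i)) with hg0
  have hder : HasFDerivAt (fun y => s y + ∑ i, α i * breg d y (xs i)) g0 xstar := by
    apply s.hasFDerivAt.add
    apply HasFDerivAt.fun_sum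
    intro i _
    have h1 : HasFDerivAt (fun y : E => (fderiv ℝ d (xs i)) (y - xs i))
        (fderiv ℝ d (xs i)) xstar := by
      have := ((fderiv ℝ d (xs i)).hasFDerivAt (x := xstar)).sub_const
        ((fderiv ℝ d (xs i)) (xs i))
      simpa [map_sub] using this
    have h2 : HasFDerivAt (fun y : E => d y - d (xs i) - (fderiv ℝ d (xs i)) (y - xs i))
        (fderiv ℝ d xstar - fderiv ℝ d (xs i)) xstar :=
      (((hddiff xstar).hasFDerivAt.sub_const (d (xs i))).sub h1)
    simpa [breg] using h2.const_mul (α i)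
  have hloc : IsLocalMin (fun y => s y + ∑ i, α i * breg d y (xs i)) xstar :=
    Filter.Eventually.of_forall hmin
  have h0 : g0 = 0 := by
    rw [← hder.fderiv]
    exact hloc.fderiv_eq_zero
  intro x
  have key : s (x - xstar) + ∑ i, α i *
      ((fderiv ℝ d xstar) (x - xstar) - (fderiv ℝ d (xs i)) (x - xstar)) = 0 := by
    have := congrArg (fun L : E →L[ℝ] ℝ => L (x - xstar)) h0
    simpa [hg0, ContinuousLinearMap.sum_apply, ContinuousLinearMap.add_apply,
      ContinuousLinearMap.smul_apply, ContinuousLinearMap.sub_apply, smul_eq_mul] using this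
  have hsum : ∀ i, α i * breg d x (xs i) = α i * breg d x xstar + α i * breg d xstar (xs i)
      + α i * ((fderiv ℝ d xstar) (x - xstar) - (fderiv ℝ d (xs i)) (x - xstar)) := by
    intro i
    simp only [breg, map_sub]
    ring
  have hs : s x = s xstar + s (x - xstar) := by rw [map_sub]; ring
  rw [Finset.sum_congr rfl (fun i _ => hsum i), Finset.sum_add_distrib,
    Finset.sum_add_distrib, ← Finset.sum_mul, hs]
  linarith [key]
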